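/- arXiv:1709.01958 — 2 statements merged into one kernel-verified Lean document; each statement's English description precedes it below -/
import Mathlib

section
/- A weighted family of rank-one projections {(w_j, π_j)}_{j=1}^n with ∑_j w_j = 1 satisfies ∑_j w_j π_j ⊗ π_j = (2/(d(d+1))) Π_sym if and only if ∑_{j,l} w_j w_l |Tr[π_j π_l]|² = 2/(d(d+1)) and ∑_j w_j π_j = I/d. -/
open Matrix BigOperators Kronecker

/-- The swap operator on ℂ^d ⊗ ℂ^d as a matrix. -/
def swapMatrix (d : ℕ) : Matrix (Fin d × Fin d) (Fin d × Fin d) ℂ :=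
  fun p q => if p.1 = q.2 ∧ p.2 = q.1 then 1 else 0

/-- The projection onto the symmetric subspace of ℂ^d ⊗ ℂ^d. -/
noncomputable def symProjection (d : ℕ) : Matrix (Fin d × Fin d) (Fin d × Fin d) ℂ :=
  (2 : ℂ)⁻¹ • (1 + swapMatrix d)

lemma kron_conjT {d : ℕ} (X Y : Matrix (Fin d) (Fin d) ℂ) :
    (X ⊗ₖ Y)ᴴ = Xᴴ ⊗ₖ Yᴴ := by
  ext ⟨a,b⟩ ⟨c,e⟩
  simp [conjTranspose_apply, kroneckerMap_apply, star_mul', mul_comm]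

lemma swap_conjT (d : ℕ) : (swapMatrix d)ᴴ = swapMatrix d := by
  ext ⟨a,b⟩ ⟨c,e⟩
  simp only [conjTranspose_apply, swapMatrix, apply_ite, star_one, star_zero]
  simp only [and_comm, eq_comm]
  split_ifs <;> simp_all

lemma symProjection_conjT (d : ℕ) : (symProjection d)ᴴ = symProjection d := by
  simp [symProjection, conjTranspose_smul, conjTranspose_add, swap_conjT, star_inv₀]

lemma swap_mul_swap (d : ℕ) : swapMatrix d * swapMatrix d = 1 := by
  ext ⟨a,b⟩ ⟨c,e⟩
  simp only [mul_apply, swapMatrix, Fintype.sum_prod_type, ite_and, one_apply, Prod.ext_iff]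
  simp [ite_and, Finset.sum_ite_eq, Finset.sum_ite_eq', eq_comm, and_comm]

lemma symProjection_idem (d : ℕ) : symProjection d * symProjection d = symProjection d := by
  simp only [symProjection, smul_mul_assoc, mul_smul_comm, add_mul, mul_add, one_mul, mul_one,
    swap_mul_swap]
  ext p q
  simp only [Matrix.smul_apply, Matrix.add_apply, smul_eq_mul]
  ring

lemma trace_swap (d : ℕ) : (swapMatrix d).trace = (d : ℂ) := by
  have : (swapMatrix d).trace = ∑ a : Fin d, ∑ b : Fin d, if b = a then (1:ℂ) else 0 := by
    simp only [Matrix.trace, Matrix.diag, swapMatrix, Fintype.sum_prod_type]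
    congr 1; ext a; congr 1; ext b
    by_cases h : b = a <;> simp [h]
  simp [this]

lemma trace_symProjection (d : ℕ) : (symProjection d).trace = (2:ℂ)⁻¹ * (d * (d+1)) := by
  simp [symProjection, trace_smul, trace_add, trace_swap, Matrix.trace_one]
  ring

lemma trace_kron_mul_swap {d : ℕ} (M N : Matrix (Fin d) (Fin d) ℂ) :
    ((M ⊗ₖ N) * swapMatrix d).trace = (M * N).trace := by
  simp only [Matrix.trace, Matrix.diag, mul_apply, swapMatrix, kroneckerMap_apply,
    Fintype.sum_prod_type, ite_and, mul_ite, mul_one, mul_zero]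
  rw [Finset.sum_comm]
  simp [Finset.sum_ite_eq', Finset.sum_ite_eq]
  exact Finset.sum_comm

lemma trace_eq_rank_of_idem {k : ℕ} (M : Matrix (Fin k) (Fin k) ℂ) (h : M * M = M) :
    M.trace = (M.rank : ℂ) := by
  have hf : M.mulVecLin ∘ₗ M.mulVecLin = M.mulVecLin := by
    rw [← Matrix.mulVecLin_mul, h]
  obtain ⟨p, hp⟩ := (LinearMap.isProj_iff_isIdempotentElem _).2 hf
  have hrange : LinearMap.range M.mulVecLin = p := by
    apply le_antisymm
    · rintro x ⟨y, rfl⟩; exact hp.map_mem y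
    · intro x hx; exact ⟨x, hp.map_id x hx⟩
  have ht := LinearMap.IsProj.trace hp
  have hm : M.trace = LinearMap.trace ℂ (Fin k → ℂ) M.mulVecLin := by
    rw [LinearMap.trace_eq_matrix_trace ℂ (Pi.basisFun ℂ (Fin k)),
      LinearMap.toMatrix_eq_toMatrix', ← Matrix.toLin'_apply', LinearMap.toMatrix'_toLin']
  rw [hm, ht, Matrix.rank, hrange]

lemma eq_zero_of_herm_trace_sq {k : Type*} [Fintype k] (M : Matrix k k ℂ)
    (hherm : Mᴴ = M) (h : (M * M).trace = 0) : M = 0 := by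
  have h3 : (Mᴴ * M).trace = ((∑ i, ∑ j, Complex.normSq (M j i) : ℝ) : ℂ) := by
    simp only [Matrix.trace, Matrix.diag, mul_apply, conjTranspose_apply]
    push_cast
    congr 1; ext i; congr 1; ext j
    rw [Complex.normSq_eq_conj_mul_self, Complex.star_def]
  rw [hherm, h] at h3
  have h4 : (∑ i, ∑ j, Complex.normSq (M j i) : ℝ) = 0 := by exact_mod_cast h3.symm
  ext i j
  have := (Finset.sum_eq_zero_iff_of_nonneg (fun i _ => Finset.sum_nonneg
    (fun j _ => Complex.normSq_nonneg (M j i)))).1 h4 j (Finset.mem_univ j)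
  have := (Finset.sum_eq_zero_iff_of_nonneg
    (fun l _ => Complex.normSq_nonneg (M l j))).1 this i (Finset.mem_univ i)
  simpa [Complex.normSq_eq_zero] using this


/-- Characterization of weighted rank-one 2-designs: the tensor-average condition
is equivalent to the fourth-moment condition together with the 1-design condition. -/
theorem weighted_two_design_iff
    (d n : ℕ) (hd : 0 < d) (w : Fin n → ℝ) (hw : ∀ j, 0 < w j)
    (hsum : ∑ j, w j = 1) (π : Fin n → Matrix (Fin d) (Fin d) ℂ)
    (hproj : ∀ j, (π j).IsHermitian ∧ π j * π j = π j ∧ (π j).rank = 1) :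
    (∑ j, (w j : ℂ) • (π j ⊗ₖ π j) = (2 / ((d : ℂ) * (d + 1))) • symProjection d)
      ↔ ((∑ j, ∑ l, w j * w l * ‖(π j * π l).trace‖ ^ 2
            = 2 / ((d : ℝ) * (d + 1))) ∧
         ∑ j, (w j : ℂ) • π j = ((d : ℂ))⁻¹ • (1 : Matrix (Fin d) (Fin d) ℂ)) := by
  have hd0 : (d : ℂ) ≠ 0 := Nat.cast_ne_zero.2 hd.ne'
  have hd1 : (d : ℂ) + 1 ≠ 0 := by
    have h := Nat.cast_ne_zero (R := ℂ) (n := d + 1) |>.2 (Nat.succ_ne_zero d)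
    push_cast at h
    exact h
  set c : ℂ := 2 / ((d : ℂ) * (d + 1)) with hc
  have hc0 : c ≠ 0 := by
    simp [hc, div_eq_iff, mul_ne_zero hd0 hd1]
  set A : Matrix (Fin d × Fin d) (Fin d × Fin d) ℂ := ∑ j, (w j : ℂ) • (π j ⊗ₖ π j) with hA
  have htr : ∀ j, (π j).trace = 1 := by
    intro j
    rw [trace_eq_rank_of_idem _ (hproj j).2.1, (hproj j).2.2]
    norm_num
  have hwsum : ∑ j, (w j : ℂ) = 1 := by exact_mod_cast congrArg (Complex.ofReal) hsum
  -- trace of A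
  have hAtr : A.trace = 1 := by
    rw [hA, trace_sum]
    simp only [trace_smul, trace_kronecker, htr, mul_one, smul_eq_mul]
    exact hwsum
  -- trace of A * swap
  have hASt : (A * swapMatrix d).trace = 1 := by
    rw [hA, Finset.sum_mul, trace_sum]
    simp only [smul_mul_assoc, trace_smul, trace_kron_mul_swap, (hproj _).2.1, htr, smul_eq_mul,
      mul_one]
    exact hwsum
  -- trace of A * symProjection
  have hAP : (A * symProjection d).trace = 1 := by
    rw [symProjection, mul_smul_comm, trace_smul, mul_add, trace_add, mul_one, hAtr, hASt]
    norm_num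
  -- trace of A * A
  have hAA : (A * A).trace = ∑ j, ∑ l, (w j : ℂ) * (w l : ℂ) * ((π j * π l).trace) ^ 2 := by
    rw [hA, Finset.sum_mul_sum, trace_sum]
    congr 1; ext j
    rw [trace_sum]
    congr 1; ext l
    rw [smul_mul_smul_comm, ← Matrix.mul_kronecker_mul, trace_smul, trace_kronecker, smul_eq_mul, sq]
  -- realness of cross traces
  have hreal : ∀ j l, (starRingEnd ℂ) ((π j * π l).trace) = (π j * π l).trace := by
    intro j l
    have h1 : ((π j * π l)ᴴ).trace = star ((π j * π l).trace) := trace_conjTranspose _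
    rw [conjTranspose_mul, (hproj j).1, (hproj l).1, trace_mul_comm] at h1
    exact h1.symm
  have habs : ∀ j l, ((‖(π j * π l).trace‖ : ℝ) ^ 2 : ℂ)
      = ((π j * π l).trace) ^ 2 := by
    intro j l
    rw [← Complex.ofReal_pow, Complex.sq_norm, Complex.normSq_eq_conj_mul_self, hreal, sq]
  -- casting the real condition
  have hcast : ((∑ j, ∑ l, w j * w l * ‖(π j * π l).trace‖ ^ 2 : ℝ) : ℂ)
      = (A * A).trace := by
    rw [hAA]
    push_cast
    congr 1; ext j; congr 1; ext l
    rw [habs]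
  have hcr : ((2 / ((d : ℝ) * (d + 1)) : ℝ) : ℂ) = c := by push_cast [hc]; ring
  have key1 : (∑ j, ∑ l, w j * w l * ‖(π j * π l).trace‖ ^ 2
      = 2 / ((d : ℝ) * (d + 1))) ↔ (A * A).trace = c := by
    rw [← hcast, ← hcr]
    exact ⟨fun h => by exact_mod_cast congrArg Complex.ofReal h,
      fun h => by exact_mod_cast h⟩
  constructor
  · intro h
    constructor
    · rw [key1]
      nth_rewrite 2 [h]
      rw [mul_smul_comm, trace_smul, hAP, smul_eq_mul, mul_one]
    · ext i k
      have hsb : ∑ b, A (i, b) (k, b) = ∑ b, (c • symProjection d) (i, b) (k, b) := by rw [h]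
      have hL : ∑ b, A (i, b) (k, b) = ∑ j, (w j : ℂ) * π j i k := by
        simp only [hA, Matrix.sum_apply, Matrix.smul_apply, kroneckerMap_apply, smul_eq_mul]
        rw [Finset.sum_comm]
        refine Finset.sum_congr rfl fun j _ => ?_
        rw [← Finset.mul_sum, ← Finset.mul_sum]
        have hbt : ∑ b, π j b b = (π j).trace := rfl
        rw [hbt, htr j, mul_one]
      have hR : ∑ b, (c • symProjection d) (i, b) (k, b)
          = ((d : ℂ)⁻¹ • (1 : Matrix (Fin d) (Fin d) ℂ)) i k := by
        have hterm : ∀ b : Fin d, (c • symProjection d) (i, b) (k, b)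
            = c * 2⁻¹ * (if i = k then 1 else 0)
              + c * 2⁻¹ * (if i = b ∧ b = k then 1 else 0) := by
          intro b
          have h1 : (1 : Matrix (Fin d × Fin d) (Fin d × Fin d) ℂ) (i, b) (k, b)
              = if i = k then 1 else 0 := by
            simp [Matrix.one_apply, Prod.ext_iff]
          simp only [Matrix.smul_apply, symProjection, Matrix.add_apply, h1, swapMatrix,
            smul_eq_mul]
          ring
        rw [Finset.sum_congr rfl (fun b _ => hterm b), Finset.sum_add_distrib, Finset.sum_const,
          ← Finset.mul_sum]
        have h2 : (∑ b : Fin d, if i = b ∧ b = k then (1:ℂ) else 0) = if i = k then 1 else 0 := by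
          by_cases hik : i = k
          · subst hik
            simp [fun b => show (i = b ∧ b = i) ↔ b = i from ⟨fun h => h.2, fun h => ⟨h.symm, h⟩⟩]
          · simp [hik, fun b => show ¬(i = b ∧ b = k) from fun h => hik (h.1.trans h.2)]
        rw [h2, Matrix.smul_apply, Matrix.one_apply, Finset.card_univ, Fintype.card_fin,
          nsmul_eq_mul]
        by_cases hik : i = k
        · simp only [hik, if_pos rfl, smul_eq_mul]
          field_simp [hc]
          have hcd : c * ((d : ℂ) * (d + 1)) = 2 := by
            rw [hc]; exact div_mul_cancel₀ _ (mul_ne_zero hd0 hd1)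
          linear_combination hcd
        · simp [hik]
      have hgoal : (∑ j, (w j : ℂ) • π j) i k = ∑ j, (w j : ℂ) * π j i k := by
        simp [Matrix.sum_apply]
      rw [hgoal, ← hL, hsb, hR]
  · rintro ⟨h1, -⟩
    have hAAc : (A * A).trace = c := key1.mp h1
    -- Hermitian of A
    have hAherm : Aᴴ = A := by
      rw [hA, conjTranspose_sum]
      refine Finset.sum_congr rfl fun j _ => ?_
      rw [conjTranspose_smul, kron_conjT, (hproj j).1.eq, Complex.star_def, Complex.conj_ofReal]
    have hMherm : (A - c • symProjection d)ᴴ = A - c • symProjection d := by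
      rw [conjTranspose_sub, hAherm, conjTranspose_smul, symProjection_conjT]
      congr 2
      simp [hc, Complex.star_def, map_div₀, map_ofNat]
    have htrM : ((A - c • symProjection d) * (A - c • symProjection d)).trace = 0 := by
      rw [sub_mul, mul_sub, mul_sub, trace_sub, trace_sub, trace_sub]
      rw [hAAc, mul_smul_comm, trace_smul, hAP, smul_mul_assoc, trace_smul, trace_mul_comm, hAP]
      rw [smul_mul_assoc, mul_smul_comm, symProjection_idem, trace_smul, trace_smul,
        trace_symProjection]
      simp only [smul_eq_mul, mul_one]
      field_simp [hc]
      have hcd : c * ((d : ℂ) * (d + 1)) = 2 := by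
        rw [hc]; exact div_mul_cancel₀ _ (mul_ne_zero hd0 hd1)
      linear_combination c * hcd
    have := eq_zero_of_herm_trace_sq _ hMherm htrM
    have : A = c • symProjection d := by
      have h' := sub_eq_zero.mp this
      exact h'
    exact this
end

section
/- If {B_i}_{i=1}^{d+1} is a maximal family of d+1 pairwise mutually unbiased bases in ℂ^d, then the d(d+1) vectors, equally weighted with w = 1/(d(d+1)), satisfy ∑_{j,l} w² |⟨f_j, f_l⟩|⁴ = 2/(d(d+1)), i.e., they form a weighted complex projective 2-design by the fourth-moment criterion. -/
open Matrix BigOperators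

/-- A maximal family of d+1 mutually unbiased bases, equally weighted, satisfies
the fourth-moment 2-design criterion. -/
theorem max_mubs_fourth_moment
    (d : ℕ) (hd : 0 < d) (B : Fin (d + 1) → Fin d → Fin d → ℂ)
    (horth : ∀ i a b, star (B i a) ⬝ᵥ B i b = if a = b then 1 else 0)
    (hmub : ∀ i i', i ≠ i' → ∀ a b,
      ‖star (B i a) ⬝ᵥ B i' b‖ ^ 2 = 1 / (d : ℝ)) :
    ∑ p : Fin (d + 1) × Fin d, ∑ q : Fin (d + 1) × Fin d,
        ((d : ℝ) * (d + 1))⁻¹ * ((d : ℝ) * (d + 1))⁻¹ *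
          ‖star (B p.1 p.2) ⬝ᵥ B q.1 q.2‖ ^ 4
      = 2 / ((d : ℝ) * (d + 1)) := by
  have hdR : (0:ℝ) < d := by exact_mod_cast hd
  have key : ∀ p q : Fin (d + 1) × Fin d,
      ‖star (B p.1 p.2) ⬝ᵥ B q.1 q.2‖ ^ 4 =
      if p.1 = q.1 then (if p.2 = q.2 then (1:ℝ) else 0) else ((d:ℝ)^2)⁻¹ := by
    intro p q
    by_cases h : p.1 = q.1
    · rw [if_pos h, h, horth]
      by_cases h2 : p.2 = q.2 <;> simp [h2]
    · rw [if_neg h]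
      have h2 := hmub p.1 q.1 h p.2 q.2
      have : ‖star (B p.1 p.2) ⬝ᵥ B q.1 q.2‖ ^ 4
          = (‖star (B p.1 p.2) ⬝ᵥ B q.1 q.2‖ ^ 2) ^ 2 := by ring
      rw [this, h2]
      field_simp
  simp only [key]
  have inner : ∀ p : Fin (d + 1) × Fin d,
      ∑ q : Fin (d + 1) × Fin d,
        (if p.1 = q.1 then (if p.2 = q.2 then (1:ℝ) else 0) else ((d:ℝ)^2)⁻¹) = 2 := by
    intro p
    rw [Fintype.sum_prod_type]
    have : ∀ i' : Fin (d+1), ∑ b : Fin d,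
        (if p.1 = i' then (if p.2 = b then (1:ℝ) else 0) else ((d:ℝ)^2)⁻¹)
        = if p.1 = i' then (1:ℝ) else (d:ℝ)⁻¹ := by
      intro i'
      by_cases h : p.1 = i'
      · simp [h, Finset.sum_ite_eq]
      · simp [h, Finset.card_univ]
        field_simp
    simp only [this]
    have split : ∀ x : Fin (d+1), (if p.1 = x then (1:ℝ) else (d:ℝ)⁻¹)
        = (d:ℝ)⁻¹ + (if p.1 = x then (1:ℝ) - (d:ℝ)⁻¹ else 0) := by
      intro x; by_cases h : p.1 = x <;> simp [h]
    simp only [split, Finset.sum_add_distrib, Finset.sum_const, Finset.card_univ,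
      Finset.sum_ite_eq, Finset.mem_univ, if_true]
    simp
    field_simp
    ring
  simp only [mul_assoc, ← Finset.mul_sum, inner]
  simp [Finset.card_univ]
  field_simp
end
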